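/- Let a₁, a₂ be natural numbers with a₂ > a₁ > 1, let k_X, l_X > 0, and suppose 0 < k < k* where k* = (1/(a₂ − a₁)) · (l_X/a₁)^{a₁} · ((a₁ − 1)/k_X)^{a₁ − 1}. Then the function f(x) = k_X − l_X x + k(a₂ − a₁)x^{a₁} has exactly two zeros in (0, ∞), and f'(x) ≠ 0 at each of these zeros. -/

import Mathlib

set_option maxHeartbeats 1000000 in
/-- For `0 < k < k*`, the steady-state function `f(x) = k_X - l_X x + k(a₂ - a₁)x^{a₁}` of
the fully open network `0 ⇄ X, a₁X → a₂X` has exactly two zeros in `(0, ∞)`, and both are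
nondegenerate (`f' ≠ 0` there). -/
theorem two_nondegenerate_steady_states_of_lt_kstar (a₁ a₂ : ℕ) (h1 : 1 < a₁) (h2 : a₁ < a₂)
    (kX lX k : ℝ) (hkX : 0 < kX) (hlX : 0 < lX) (hk : 0 < k)
    (hklt : k < (1 / ((a₂ : ℝ) - (a₁ : ℝ))) * (lX / (a₁ : ℝ)) ^ a₁ *
      (((a₁ : ℝ) - 1) / kX) ^ (a₁ - 1)) :
    ∃ x₁ x₂ : ℝ, 0 < x₁ ∧ 0 < x₂ ∧ x₁ ≠ x₂ ∧
      (kX - lX * x₁ + k * ((a₂ : ℝ) - (a₁ : ℝ)) * x₁ ^ a₁ = 0) ∧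
      (kX - lX * x₂ + k * ((a₂ : ℝ) - (a₁ : ℝ)) * x₂ ^ a₁ = 0) ∧
      (∀ x : ℝ, 0 < x → kX - lX * x + k * ((a₂ : ℝ) - (a₁ : ℝ)) * x ^ a₁ = 0 →
        x = x₁ ∨ x = x₂) ∧
      deriv (fun x : ℝ => kX - lX * x + k * ((a₂ : ℝ) - (a₁ : ℝ)) * x ^ a₁) x₁ ≠ 0 ∧
      deriv (fun x : ℝ => kX - lX * x + k * ((a₂ : ℝ) - (a₁ : ℝ)) * x ^ a₁) x₂ ≠ 0 := by
  have hA1 : (1:ℝ) < (a₁:ℝ) := by exact_mod_cast h1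
  have hA0 : (0:ℝ) < (a₁:ℝ) := by linarith
  have hd : (0:ℝ) < (a₂:ℝ) - (a₁:ℝ) := by
    have : (a₁:ℝ) < (a₂:ℝ) := by exact_mod_cast h2
    linarith
  set A : ℝ := (a₁ : ℝ) with hAdef
  set t : ℕ := a₁ - 1 with htdef
  have hta : a₁ = t + 1 := by omega
  have ht0 : t ≠ 0 := by omega
  set c : ℝ := k * ((a₂:ℝ) - A) with hcdef
  have hc : 0 < c := mul_pos hk hd
  set f : ℝ → ℝ := fun x => kX - lX * x + c * x ^ a₁ with hf
  have hderiv : ∀ x : ℝ, HasDerivAt f (-lX + c * (A * x ^ t)) x := by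
    intro x
    have h1' : HasDerivAt (fun x : ℝ => kX - lX * x) (-(lX * 1)) x :=
      ((hasDerivAt_id x).const_mul lX).const_sub kX
    have h2' : HasDerivAt (fun x : ℝ => c * x ^ a₁) (c * (A * x ^ (a₁ - 1))) x := by
      simpa [mul_assoc] using (hasDerivAt_pow a₁ x).const_mul c
    have := h1'.add h2'
    rw [mul_one] at this; exact this
  have hcont : Continuous f := by fun_prop
  set v : ℝ := lX / (c * A) with hvdef
  have hv : 0 < v := div_pos hlX (mul_pos hc hA0)
  set s : ℝ := v ^ ((t:ℝ)⁻¹) with hsdef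
  have hs0 : 0 < s := Real.rpow_pos_of_pos hv _
  have hst : s ^ t = v := Real.rpow_inv_natCast_pow hv.le ht0
  have hcst : c * A * s ^ t = lX := by
    rw [hst, hvdef]; field_simp
  have hderivneg : ∀ x : ℝ, 0 ≤ x → x < s → -lX + c * (A * x ^ t) < 0 := by
    intro x hx hxs
    have h := pow_lt_pow_left₀ hxs hx ht0
    nlinarith [mul_pos hc hA0]
  have hderivpos : ∀ x : ℝ, s < x → 0 < -lX + c * (A * x ^ t) := by
    intro x hxs
    have h := pow_lt_pow_left₀ hxs hs0.le ht0
    nlinarith [mul_pos hc hA0]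
  have hanti : StrictAntiOn f (Set.Icc 0 s) := by
    apply strictAntiOn_of_deriv_neg (convex_Icc 0 s) hcont.continuousOn
    intro x hx
    rw [interior_Icc] at hx
    rw [(hderiv x).deriv]
    exact hderivneg x hx.1.le hx.2
  have hmono : StrictMonoOn f (Set.Ici s) := by
    apply strictMonoOn_of_deriv_pos (convex_Ici s) hcont.continuousOn
    intro x hx
    rw [interior_Ici] at hx
    rw [(hderiv x).deriv]
    exact hderivpos x hx
  have hf0 : f 0 = kX := by
    simp [hf, zero_pow (by omega : a₁ ≠ 0)]
  -- key inequality : f s < 0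
  have hcA : c < (lX / A) ^ a₁ * ((A - 1) / kX) ^ t := by
    have h := mul_lt_mul_of_pos_right hklt hd
    have h2 : 1 / ((a₂:ℝ) - A) * (lX / A) ^ a₁ * ((A - 1) / kX) ^ t * ((a₂:ℝ) - A)
        = (lX / A) ^ a₁ * ((A - 1) / kX) ^ t := by
      field_simp
    rw [h2] at h
    rw [hcdef]; exact h
  set B : ℝ := kX * A / (lX * (A - 1)) with hBdef
  have hB : 0 < B := div_pos (mul_pos hkX hA0) (mul_pos hlX (by linarith))
  have hAm1 : A - 1 ≠ 0 := ne_of_gt (by linarith)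
  have h1B : lX / A * ((A - 1) / kX) * B = 1 := by
    rw [hBdef]
    field_simp [hlX.ne', hkX.ne', hA0.ne', hAm1]
  have hE : (lX / A) ^ a₁ * ((A - 1) / kX) ^ t * (A * B ^ t) = lX := by
    rw [hta, pow_succ]
    calc (lX/A)^t * (lX/A) * ((A-1)/kX)^t * (A * B^t)
        = (lX/A * ((A-1)/kX) * B)^t * ((lX/A) * A) := by
          rw [mul_pow, mul_pow]; ring
      _ = lX := by rw [h1B, one_pow, one_mul, div_mul_cancel₀ _ (ne_of_gt hA0)]
  have hkey : c * A * B ^ t < lX := by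
    have hpos : 0 < A * B ^ t := mul_pos hA0 (pow_pos hB t)
    calc c * A * B ^ t = c * (A * B ^ t) := by ring
      _ < (lX/A)^a₁ * ((A-1)/kX)^t * (A * B^t) := mul_lt_mul_of_pos_right hcA hpos
      _ = lX := hE
  have hBt : B ^ t < s ^ t := by
    have hcA0 : 0 < c * A := mul_pos hc hA0
    have := hkey.trans_eq hcst.symm
    exact lt_of_mul_lt_mul_left (by nlinarith) hcA0.le
  have hBs : B < s := lt_of_pow_lt_pow_left₀ t hs0.le hBt
  have hfs : f s < 0 := by
    have hcs : c * s ^ a₁ = lX / A * s := by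
      rw [hta, pow_succ, ← mul_assoc]
      have h3 : c * s ^ t = lX / A := by
        rw [eq_div_iff (ne_of_gt hA0)]
        linarith [hcst]
      rw [h3]
    show kX - lX * s + c * s ^ a₁ < 0
    rw [hcs]
    have hlin : kX * A < lX * (A - 1) * s := by
      have := (div_lt_iff₀ (mul_pos hlX (by linarith : (0:ℝ) < A - 1))).mp hBs
      linarith
    have key : kX - lX * s + lX / A * s = (kX * A - lX * (A - 1) * s) / A := by
      field_simp [hA0.ne']
      ring
    rw [key]
    exact div_neg_of_neg_of_pos (by linarith) hA0
  -- first zero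
  obtain ⟨x₁, hx₁mem, hx₁⟩ : ∃ x ∈ Set.Ioo 0 s, f x = 0 := by
    have h := intermediate_value_Ioo' hs0.le hcont.continuousOn
    have hz : (0:ℝ) ∈ Set.Ioo (f s) (f 0) := ⟨hfs, by rw [hf0]; exact hkX⟩
    obtain ⟨x, hx, hfx⟩ := h hz
    exact ⟨x, hx, hfx⟩
  -- large point
  set M : ℝ := max (s+1) (lX / c + 1) with hM
  have hM1 : 1 ≤ M := le_trans (by nlinarith [div_pos hlX hc] : (1:ℝ) ≤ lX/c + 1) (le_max_right _ _)
  have hMs : s < M := lt_of_lt_of_le (by linarith) (le_max_left _ _)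
  have hMl : lX / c + 1 ≤ M := le_max_right _ _
  have hfM : 0 < f M := by
    have hMt : M ≤ M ^ t := le_self_pow₀ hM1 ht0
    have hlt : lX < c * M ^ t := by
      have h4 : lX / c + 1 ≤ M ^ t := le_trans hMl hMt
      have h5 := mul_le_mul_of_nonneg_left h4 hc.le
      have h6 : c * (lX/c + 1) = lX + c := by field_simp
      linarith
    show 0 < kX - lX * M + c * M ^ a₁
    rw [hta, pow_succ]
    nlinarith [mul_pos (sub_pos.2 hlt) (lt_of_lt_of_le one_pos hM1)]
  obtain ⟨x₂, hx₂mem, hx₂⟩ : ∃ x ∈ Set.Ioo s M, f x = 0 := by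
    have h := intermediate_value_Ioo hMs.le hcont.continuousOn
    have hz : (0:ℝ) ∈ Set.Ioo (f s) (f M) := ⟨hfs, hfM⟩
    obtain ⟨x, hx, hfx⟩ := h hz
    exact ⟨x, hx, hfx⟩
  refine ⟨x₁, x₂, hx₁mem.1, lt_trans hs0 hx₂mem.1, ne_of_lt (lt_trans hx₁mem.2 hx₂mem.1),
    hx₁, hx₂, ?_, ?_, ?_⟩
  · intro x hx hfx
    have hfx' : f x = 0 := hfx
    rcases lt_trichotomy x s with hlt | heq | hgt
    · left
      exact hanti.injOn ⟨hx.le, hlt.le⟩ ⟨hx₁mem.1.le, hx₁mem.2.le⟩ (by rw [hfx', hx₁])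
    · exfalso; rw [heq] at hfx'; linarith
    · right
      exact hmono.injOn hgt.le hx₂mem.1.le (by rw [hfx', hx₂])
  · rw [(hderiv x₁).deriv]
    exact ne_of_lt (hderivneg x₁ hx₁mem.1.le hx₁mem.2)
  · rw [(hderiv x₂).deriv]
    exact ne_of_gt (hderivpos x₂ hx₂mem.1)
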